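/- Let d > 0, r > 0, b > 1, c > 2√(rd), and set λ_v = (c − √(c² − 4rd))/(2d). Let η ∈ (0, min(λ_v, √(c² − 4rd)/d)) and B > 0. Set K = r(1 + bB)/(η(√(c² − 4rd) − dη)), ξ_β = (ln K)/η, and β(ξ) = exp(−λ_v(ξ + ξ_β)) − K·exp(−(λ_v + η)(ξ + ξ_β)). Then β(ξ) > 0 for all ξ > 0, and for every σ ≥ η and every ξ > 0: −d·β''(ξ) − c·β'(ξ) ≤ r·β(ξ)·(1 − β(ξ) − bB·exp(−σ(ξ + ξ_β))). -/

import Mathlib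

open Real

private lemma expDerivAux (a s ξ : ℝ) :
    HasDerivAt (fun x => Real.exp (a * (x + s))) (Real.exp (a * (ξ + s)) * a) ξ := by
  have h : HasDerivAt (fun x : ℝ => a * (x + s)) a ξ := by
    simpa using ((hasDerivAt_id ξ).add_const s).const_mul a
  simpa using h.exp

set_option maxHeartbeats 1000000 in
/-- The sub-solution `β(ξ) = e^{-λ_v(ξ+ξ_β)} - K e^{-(λ_v+η)(ξ+ξ_β)}` is positive
on `(0,∞)` and satisfies there, for every `σ ≥ η`,
`-dβ'' - cβ' ≤ rβ(1 - β - bB e^{-σ(ξ+ξ_β)})`. -/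
theorem beta_sub_solution
    (d r b c η B lamv K ξβ : ℝ) (hd : 0 < d) (hr : 0 < r) (hb : 1 < b)
    (hc : 2 * Real.sqrt (r * d) < c)
    (hlamv : lamv = (c - Real.sqrt (c ^ 2 - 4 * r * d)) / (2 * d))
    (hη0 : 0 < η) (hη1 : η < min lamv (Real.sqrt (c ^ 2 - 4 * r * d) / d))
    (hB : 0 < B)
    (hK : K = r * (1 + b * B) / (η * (Real.sqrt (c ^ 2 - 4 * r * d) - d * η)))
    (hξβ : ξβ = Real.log K / η)
    (β : ℝ → ℝ)
    (hβ : ∀ ξ, β ξ = Real.exp (-lamv * (ξ + ξβ)) - K * Real.exp (-(lamv + η) * (ξ + ξβ))) :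
    (∀ ξ : ℝ, 0 < ξ → 0 < β ξ) ∧
    (∀ σ, η ≤ σ → ∀ ξ : ℝ, 0 < ξ →
      -d * deriv (deriv β) ξ - c * deriv β ξ ≤
        r * β ξ * (1 - β ξ - b * B * Real.exp (-σ * (ξ + ξβ)))) := by
  have hc0 : 0 < c := lt_of_le_of_lt (by positivity) hc
  have hdisc : 0 < c ^ 2 - 4 * r * d := by
    nlinarith [Real.sq_sqrt (by positivity : (0:ℝ) ≤ r * d), Real.sqrt_nonneg (r * d)]
  set Δ := Real.sqrt (c ^ 2 - 4 * r * d) with hΔdef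
  have hΔsq : Δ ^ 2 = c ^ 2 - 4 * r * d := Real.sq_sqrt hdisc.le
  have hΔpos : 0 < Δ := Real.sqrt_pos.mpr hdisc
  have hΔc : Δ < c := by nlinarith
  have hlam_pos : 0 < lamv := by
    rw [hlamv]; exact div_pos (by linarith) (by positivity)
  have hηlam : η < lamv := lt_of_lt_of_le hη1 (min_le_left _ _)
  have hηΔ : d * η < Δ := by
    have h := lt_of_lt_of_le hη1 (min_le_right _ _)
    rw [lt_div_iff₀ hd] at h; linarith
  have hquad : d * lamv ^ 2 - c * lamv + r = 0 := by
    rw [hlamv]; field_simp; nlinarith [hΔsq]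
  have hΔlam : Δ = c - 2 * d * lamv := by
    rw [hlamv]; field_simp; ring
  have hD : 0 < Δ - d * η := by linarith
  have hηD : 0 < η * (Δ - d * η) := by positivity
  have hlamΔ : lamv * Δ = r - d * lamv ^ 2 := by
    linear_combination lamv * hΔlam - hquad
  have hηDr : η * (Δ - d * η) < r * (1 + b * B) := by
    have s1 : η * (Δ - d * η) < lamv * (Δ - d * η) :=
      mul_lt_mul_of_pos_right hηlam hD
    have s2 : lamv * (Δ - d * η) ≤ lamv * Δ := by nlinarith
    have s3 : 0 < d * lamv ^ 2 := by positivity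
    have s4 : 0 < r * (b * B) := by positivity
    nlinarith
  have hKgt1 : 1 < K := by
    rw [hK, lt_div_iff₀ hηD]; linarith
  have hKpos : 0 < K := by linarith
  have hξβpos : 0 < ξβ := by
    rw [hξβ]; exact div_pos (Real.log_pos hKgt1) hη0
  -- positivity of β
  have hpos : ∀ ξ : ℝ, 0 < ξ → K * Real.exp (-(lamv + η) * (ξ + ξβ)) < Real.exp (-lamv * (ξ + ξβ)) := by
    intro ξ hξ
    have hKx : K < Real.exp (η * (ξ + ξβ)) := by
      have h1 : Real.exp (η * (ξ + ξβ)) = Real.exp (η * ξ) * Real.exp (η * ξβ) := by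
        rw [← Real.exp_add]; ring_nf
      have h2 : Real.exp (η * ξβ) = K := by
        rw [hξβ, mul_div_cancel₀ _ hη0.ne', Real.exp_log hKpos]
      have h3 : 1 < Real.exp (η * ξ) := by
        calc (1:ℝ) = Real.exp 0 := Real.exp_zero.symm
          _ < Real.exp (η * ξ) := Real.exp_lt_exp.mpr (by positivity)
      calc K = 1 * K := (one_mul K).symm
        _ < Real.exp (η * ξ) * K := by exact mul_lt_mul_of_pos_right h3 hKpos
        _ = Real.exp (η * (ξ + ξβ)) := by rw [h1, h2]
    have := mul_lt_mul_of_pos_right hKx (Real.exp_pos (-(lamv + η) * (ξ + ξβ)))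
    calc K * Real.exp (-(lamv + η) * (ξ + ξβ))
        < Real.exp (η * (ξ + ξβ)) * Real.exp (-(lamv + η) * (ξ + ξβ)) := this
      _ = Real.exp (-lamv * (ξ + ξβ)) := by rw [← Real.exp_add]; ring_nf
  have hβpos : ∀ ξ : ℝ, 0 < ξ → 0 < β ξ := by
    intro ξ hξ; rw [hβ]; linarith [hpos ξ hξ]
  refine ⟨hβpos, ?_⟩
  -- derivatives
  have hβfun : β = fun ξ => Real.exp (-lamv * (ξ + ξβ)) - K * Real.exp (-(lamv + η) * (ξ + ξβ)) :=
    funext hβ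
  have hder1 : ∀ ξ : ℝ, HasDerivAt β
      (Real.exp (-lamv * (ξ + ξβ)) * (-lamv) - K * (Real.exp (-(lamv + η) * (ξ + ξβ)) * (-(lamv + η)))) ξ := by
    intro ξ
    rw [hβfun]
    exact (expDerivAux (-lamv) ξβ ξ).sub ((expDerivAux (-(lamv + η)) ξβ ξ).const_mul K)
  have hderiv1 : deriv β = fun ξ =>
      Real.exp (-lamv * (ξ + ξβ)) * (-lamv) - K * (Real.exp (-(lamv + η) * (ξ + ξβ)) * (-(lamv + η))) :=
    funext fun ξ => (hder1 ξ).deriv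
  have hder2 : ∀ ξ : ℝ, HasDerivAt (deriv β)
      (Real.exp (-lamv * (ξ + ξβ)) * (-lamv) * (-lamv)
        - K * (Real.exp (-(lamv + η) * (ξ + ξβ)) * (-(lamv + η)) * (-(lamv + η)))) ξ := by
    intro ξ
    rw [hderiv1]
    exact ((expDerivAux (-lamv) ξβ ξ).mul_const (-lamv)).sub
      (((expDerivAux (-(lamv + η)) ξβ ξ).mul_const (-(lamv + η))).const_mul K)
  intro σ hσ ξ hξ
  rw [hβ, (hder1 ξ).deriv, (hder2 ξ).deriv]
  set x := ξ + ξβ with hxdef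
  have hx : 0 < x := by have := hξβpos; simp only [hxdef]; linarith
  set E1 := Real.exp (-lamv * x) with hE1
  set E2 := Real.exp (-(lamv + η) * x) with hE2
  set E3 := Real.exp (-σ * x) with hE3
  have hE1pos : 0 < E1 := Real.exp_pos _
  have hE2pos : 0 < E2 := Real.exp_pos _
  have hE3pos : 0 < E3 := Real.exp_pos _
  have hβ0pos : 0 < E1 - K * E2 := sub_pos.mpr (hpos ξ hξ)
  have hβ0le : E1 - K * E2 ≤ E1 := by nlinarith
  have hE1sq : E1 ^ 2 ≤ E2 := by
    rw [hE1, hE2, sq, ← Real.exp_add]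
    exact Real.exp_le_exp.mpr (by nlinarith)
  have hE1E3 : E1 * E3 ≤ E2 := by
    rw [hE1, hE2, hE3, ← Real.exp_add]
    exact Real.exp_le_exp.mpr (by nlinarith)
  have hKval : K * (η * (Δ - d * η)) = r * (1 + b * B) := by
    rw [hK]; exact div_mul_cancel₀ _ hηD.ne'
  have key : -d * (E1 * (-lamv) * (-lamv) - K * (E2 * (-(lamv + η)) * (-(lamv + η))))
      - c * (E1 * (-lamv) - K * (E2 * (-(lamv + η))))
      = r * E1 - K * (r + η * (Δ - d * η)) * E2 := by
    linear_combination (-E1 + K * E2) * hquad + (K * E2 * η) * hΔlam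
  rw [key]
  have h1 : r * (E1 - K * E2) ^ 2 ≤ r * E2 := by
    have hsq : (E1 - K * E2) ^ 2 ≤ E1 ^ 2 := pow_le_pow_left₀ hβ0pos.le hβ0le 2
    exact mul_le_mul_of_nonneg_left (hsq.trans hE1sq) hr.le
  have h2 : r * (b * B) * ((E1 - K * E2) * E3) ≤ r * (b * B) * E2 := by
    have hmul : (E1 - K * E2) * E3 ≤ E2 :=
      (mul_le_mul_of_nonneg_right hβ0le hE3pos.le).trans hE1E3
    exact mul_le_mul_of_nonneg_left hmul (by positivity)
  have expand : r * (E1 - K * E2) * (1 - (E1 - K * E2) - b * B * E3)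
      = r * E1 - r * (K * E2) - r * (E1 - K * E2) ^ 2
        - r * (b * B) * ((E1 - K * E2) * E3) := by ring
  have hKE2 : K * (r + η * (Δ - d * η)) * E2 = r * (K * E2) + r * (1 + b * B) * E2 := by
    linear_combination E2 * hKval
  rw [expand]
  have hE2' : 0 ≤ r * (b * B) * E2 + r * E2 - (r * (1 + b * B) * E2) := by ring_nf; linarith
  linarith [h1, h2, hKE2]
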